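/- Let F be a CDF on ℝ, σ_b > 0, c > 0, and define h(z) = ∫_ℝ F(log c − b − z) · (1/σ_b) φ(b/σ_b) db, where φ is the standard Gaussian density. Then h is strictly decreasing on ℝ. -/

import Mathlib

open Filter MeasureTheory

/-- The standard Gaussian density. -/
noncomputable def stdGaussPDF (x : ℝ) : ℝ :=
  (Real.sqrt (2 * Real.pi))⁻¹ * Real.exp (-x ^ 2 / 2)

/-- With `F` a CDF, `σb > 0`, `c > 0`, the function
`h(z) = ∫ F(log c − b − z) (1/σb) φ(b/σb) db` is strictly decreasing on ℝ. -/
theorem mixing_map_strictAnti (F : ℝ → ℝ) (σb c : ℝ) (hσ : 0 < σb) (hc : 0 < c)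
    (hmono : Monotone F)
    (hrc : ∀ x : ℝ, ContinuousWithinAt F (Set.Ici x) x)
    (hbot : Tendsto F atBot (nhds 0))
    (htop : Tendsto F atTop (nhds 1)) :
    StrictAnti (fun z : ℝ =>
      ∫ b : ℝ, F (Real.log c - b - z) * (σb⁻¹ * stdGaussPDF (b / σb))) := by
  have hF0 : ∀ x, 0 ≤ F x := fun x =>
    le_of_tendsto hbot (eventually_atBot.2 ⟨x, fun y hy => hmono hy⟩)
  have hF1 : ∀ x, F x ≤ 1 := fun x =>
    ge_of_tendsto htop (eventually_atTop.2 ⟨x, fun y hy => hmono hy⟩)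
  set w : ℝ → ℝ := fun b => σb⁻¹ * stdGaussPDF (b / σb) with hw
  have hπ : 0 < Real.sqrt (2 * Real.pi) := Real.sqrt_pos.2 (by positivity)
  have hwpos : ∀ b, 0 < w b := by
    intro b
    have : 0 < stdGaussPDF (b / σb) := by
      unfold stdGaussPDF
      positivity
    positivity
  have hwint : Integrable w := by
    have h1 : Integrable (fun b : ℝ => Real.exp (-(1 / (2 * σb ^ 2)) * b ^ 2)) :=
      integrable_exp_neg_mul_sq (by positivity)
    have h2 := h1.const_mul (σb⁻¹ * (Real.sqrt (2 * Real.pi))⁻¹)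
    have heqw : w = fun b : ℝ =>
        σb⁻¹ * (Real.sqrt (2 * Real.pi))⁻¹ * Real.exp (-(1 / (2 * σb ^ 2)) * b ^ 2) := by
      funext b
      show σb⁻¹ * ((Real.sqrt (2 * Real.pi))⁻¹ * Real.exp (-(b / σb) ^ 2 / 2)) = _
      rw [div_pow]
      ring_nf
    rw [heqw]
    exact h2
  have hFmeas : Measurable F := hmono.measurable
  have hwmeas : Measurable w := by
    have : Measurable fun b : ℝ => σb⁻¹ *
        ((Real.sqrt (2 * Real.pi))⁻¹ * Real.exp (-(b / σb) ^ 2 / 2)) := by fun_prop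
    exact this
  have hint : ∀ z : ℝ, Integrable (fun b => F (Real.log c - b - z) * w b) := by
    intro z
    have hmeas : AEStronglyMeasurable (fun b => F (Real.log c - b - z) * w b) volume :=
      ((hFmeas.comp (by fun_prop : Measurable fun b : ℝ =>
        Real.log c - b - z)).mul hwmeas).aestronglyMeasurable
    apply hwint.mono hmeas
    filter_upwards with b
    have h1 := hF0 (Real.log c - b - z)
    have h2 := hF1 (Real.log c - b - z)
    have h3 := (hwpos b).le
    rw [Real.norm_eq_abs, Real.norm_eq_abs, abs_of_nonneg h3,
      abs_of_nonneg (mul_nonneg h1 h3)]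
    nlinarith
  intro z1 z2 hlt
  set δ : ℝ := z2 - z1 with hδ
  have hδpos : 0 < δ := sub_pos.2 hlt
  set L : ℝ := Real.log c with hL
  -- Step A: there is a point where F strictly increases over a gap δ
  have hA : ∃ u0 : ℝ, F u0 < F (u0 + δ) := by
    by_contra h
    push_neg at h
    have heq : ∀ u : ℝ, F (u + δ) = F u := fun u =>
      le_antisymm (h u) (hmono (by linarith))
    have hpos : ∀ n : ℕ, F (n * δ) = F 0 := by
      intro n
      induction n with
      | zero => simp
      | succ k ih =>
        have e : ((k : ℝ) + 1) * δ = k * δ + δ := by ring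
        rw [Nat.cast_succ, e, heq, ih]
    have hneg : ∀ n : ℕ, F (-(n * δ)) = F 0 := by
      intro n
      induction n with
      | zero => simp
      | succ k ih =>
        have e : -((k : ℝ) * δ) = -(((k : ℝ) + 1) * δ) + δ := by ring
        rw [e, heq] at ih
        rw [Nat.cast_succ]
        exact ih
    have hmul : Tendsto (fun n : ℕ => (n : ℝ) * δ) atTop atTop :=
      tendsto_natCast_atTop_atTop.atTop_mul_const hδpos
    have htend1 : Tendsto (fun n : ℕ => F (n * δ)) atTop (nhds 1) := htop.comp hmul
    have htend0 : Tendsto (fun n : ℕ => F (-(n * δ))) atTop (nhds 0) :=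
      hbot.comp (tendsto_neg_atTop_atBot.comp hmul)
    have e1 : F 0 = 1 := tendsto_const_nhds_iff.1
      (htend1.congr (fun n => hpos n))
    have e0 : F 0 = 0 := tendsto_const_nhds_iff.1
      (htend0.congr (fun n => hneg n))
    rw [e0] at e1
    norm_num at e1
  obtain ⟨u0, hu0⟩ := hA
  -- Step B: a right neighborhood where F u < F (u0 + δ)
  have hev : ∀ᶠ u in nhdsWithin u0 (Set.Ici u0), F u < F (u0 + δ) :=
    (hrc u0).eventually_lt_const hu0
  obtain ⟨u', hu', hsub⟩ := mem_nhdsGE_iff_exists_Ico_subset.1 hev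
  have hu'gt : u0 < u' := hu'
  -- Step C: integral of nonneg difference is positive
  set g : ℝ → ℝ := fun b => (F (L - b - z1) - F (L - b - z2)) * w b with hg
  have hgnn : ∀ b, 0 ≤ g b := by
    intro b
    apply mul_nonneg _ (hwpos b).le
    have : L - b - z2 ≤ L - b - z1 := by linarith
    linarith [hmono this]
  have hgint : Integrable g := by
    have := (hint z1).sub (hint z2)
    apply this.congr
    filter_upwards with b
    simp only [hg, Pi.sub_apply]
    ring
  have hsupp : Set.Ioo (L - z2 - u') (L - z2 - u0) ⊆ Function.support g := by
    intro b hb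
    have hb1 : u0 < L - b - z2 := by have := hb.2; simp only [Set.mem_Ioo] at hb; linarith
    have hb2 : L - b - z2 < u' := by simp only [Set.mem_Ioo] at hb; linarith
    have hmem : L - b - z2 ∈ Set.Ico u0 u' := ⟨hb1.le, hb2⟩
    have h1 : F (L - b - z2) < F (u0 + δ) := hsub hmem
    have h2 : F (u0 + δ) ≤ F (L - b - z1) := by
      apply hmono
      simp only [hδ]
      linarith
    have : 0 < g b := mul_pos (by linarith) (hwpos b)
    exact fun hcontra => by rw [hcontra] at this; exact lt_irrefl 0 this
  have hmeaspos : 0 < volume (Function.support g) := by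
    refine lt_of_lt_of_le ?_ (measure_mono hsupp)
    rw [Real.volume_Ioo]
    simp only [ENNReal.ofReal_pos]
    linarith
  have hkey : 0 < ∫ b, g b := by
    rw [integral_pos_iff_support_of_nonneg hgnn hgint]
    exact hmeaspos
  have hsplit : ∫ b, g b = (∫ b, F (L - b - z1) * w b) - ∫ b, F (L - b - z2) * w b := by
    rw [← integral_sub (hint z1) (hint z2)]
    congr 1
    funext b
    simp only [hg]
    ring
  simp only
  rw [hsplit] at hkey
  linarith
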